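/- Propagation step for the filter distribution: for every n ≥ 1, if 0 < μ_{n-1,n-1}(S^n) < ∞, then the one-step predictive distribution satisfies π_{n|n-1}(dx_n) = ∫ π_{n-1}(dx_{n-1}) P(dx_n|x_{n-1}); i.e., π_{n|n-1} equals the image of π_{n-1} under the kernel P (the measure bind of π_{n-1} with P). -/

import Mathlib

open MeasureTheory ProbabilityTheory
open scoped ENNReal NNReal

/-- Law of the first `n+1` steps `(X_0, …, X_n)` of a Markov chain with initial
distribution `π0` and transition kernel `P`. -/
noncomputable def chainLaw {S : Type*} [MeasurableSpace S] (π0 : Measure S)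
    (P : Kernel S S) : (n : ℕ) → Measure (Fin (n + 1) → S)
  | 0 => π0.map (fun x => fun _ => x)
  | n + 1 => (chainLaw π0 P n).bind (fun x => (P (x (Fin.last n))).map (Fin.snoc x))

open Fin.NatCast in
/-- The finite measure `μ_{n,m}(dx_{0:n}) = π0(dx_0) ∏_{t=1}^n P(dx_t|x_{t-1})
∏_{t=1}^m g(y_t|x_t)` on `S^{n+1}`. -/
noncomputable def ssmMu {S : Type*} [MeasurableSpace S] {d : ℕ} (π0 : Measure S)
    (P : Kernel S S) (g : (Fin d → ℝ) → S → ℝ) (y : ℕ → Fin d → ℝ) (n m : ℕ) :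
    Measure (Fin (n + 1) → S) :=
  (chainLaw π0 P n).withDensity
    (fun x => ∏ t ∈ Finset.Icc 1 m, ENNReal.ofReal (g (y t) (x (t : Fin (n + 1)))))

/-- The conditional distribution `π_{0:n|m}`, i.e. `μ_{n,m}` normalized to a
probability measure. -/
noncomputable def ssmPi {S : Type*} [MeasurableSpace S] {d : ℕ} (π0 : Measure S)
    (P : Kernel S S) (g : (Fin d → ℝ) → S → ℝ) (y : ℕ → Fin d → ℝ) (n m : ℕ) :
    Measure (Fin (n + 1) → S) :=
  (ssmMu π0 P g y n m Set.univ)⁻¹ • ssmMu π0 P g y n m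

/-- The marginal `π_{n|m}` of `π_{0:n|m}` in the last coordinate `x_n`. -/
noncomputable def ssmPiMarg {S : Type*} [MeasurableSpace S] {d : ℕ} (π0 : Measure S)
    (P : Kernel S S) (g : (Fin d → ℝ) → S → ℝ) (y : ℕ → Fin d → ℝ) (n m : ℕ) :
    Measure S :=
  (ssmPi π0 P g y n m).map (fun x => x (Fin.last n))

section aux
variable {S : Type*} [MeasurableSpace S] {n : ℕ}

lemma measurable_snoc_right (x : Fin (n + 1) → S) :
    Measurable (fun z => Fin.snoc x z : S → Fin (n + 2) → S) := by
  refine measurable_pi_iff.2 fun i => ?_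
  induction i using Fin.lastCases with
  | last => simpa [Fin.snoc_last] using measurable_id'
  | cast j => simp only [Fin.snoc_castSucc]; exact measurable_const

lemma measurable_snoc_pair :
    Measurable (fun p : ((Fin (n + 1) → S) × S) => (Fin.snoc p.1 p.2 : Fin (n + 2) → S)) := by
  refine measurable_pi_iff.2 fun i => ?_
  induction i using Fin.lastCases with
  | last => simpa [Fin.snoc_last] using measurable_snd
  | cast j =>
      simp only [Fin.snoc_castSucc]
      exact (measurable_pi_apply j).comp measurable_fst

lemma measurable_snocStep (P : Kernel S S) [IsMarkovKernel P] :
    Measurable (fun x : Fin (n + 1) → S =>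
      ((P (x (Fin.last n))).map (Fin.snoc x) : Measure (Fin (n + 2) → S))) := by
  apply Measure.measurable_of_measurable_coe
  intro s hs
  simp_rw [Measure.map_apply (measurable_snoc_right _) hs]
  have ht : MeasurableSet {p : ((Fin (n + 1) → S) × S) | (Fin.snoc p.1 p.2 : Fin (n+2) → S) ∈ s} :=
    measurable_snoc_pair hs
  have := Kernel.measurable_kernel_prodMk_left
    (κ := P.comap (fun x : Fin (n + 1) → S => x (Fin.last n)) (measurable_pi_apply _)) ht
  exact this

end aux

/-- **Propagation step for the filter distribution.**
For every `n ≥ 1` (here the paper's `n` is `n+1`), if `0 < μ_{n-1,n-1}(Sⁿ) < ∞`,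
then the one-step predictive distribution satisfies
`π_{n|n-1}(dx_n) = ∫ π_{n-1}(dx_{n-1}) P(dx_n|x_{n-1})`, i.e. `π_{n|n-1}` is the
bind of `π_{n-1}` with the kernel `P`. -/
theorem filter_propagation_step {S : Type*} [MeasurableSpace S] {d : ℕ}
    (π0 : Measure S) [IsProbabilityMeasure π0] (P : Kernel S S) [IsMarkovKernel P]
    (g : (Fin d → ℝ) → S → ℝ) (hg0 : ∀ y x, 0 ≤ g y x) (hgm : ∀ y, Measurable (g y))
    (ν : Measure (Fin d → ℝ)) [SigmaFinite ν] (y : ℕ → Fin d → ℝ) (n : ℕ)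
    (hpos : 0 < ssmMu π0 P g y n n Set.univ) (hfin : ssmMu π0 P g y n n Set.univ < ⊤) :
    ssmPiMarg π0 P g y (n + 1) n = (ssmPiMarg π0 P g y n n).bind (fun x => P x) := by
  classical
  set κ : (Fin (n + 1) → S) → Measure (Fin (n + 2) → S) :=
    fun x => (P (x (Fin.last n))).map (Fin.snoc x) with hκdef
  have hκ : Measurable κ := measurable_snocStep P
  open Fin.NatCast in set c : (Fin (n + 1) → S) → ℝ≥0∞ :=
    fun x => ∏ t ∈ Finset.Icc 1 n, ENNReal.ofReal (g (y t) (x (t : Fin (n + 1)))) with hcdef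
  open Fin.NatCast in set f : (Fin (n + 2) → S) → ℝ≥0∞ :=
    fun x => ∏ t ∈ Finset.Icc 1 n, ENNReal.ofReal (g (y t) (x (t : Fin (n + 2)))) with hfdef
  have hc : Measurable c := by
    refine Finset.measurable_prod _ fun t _ => ?_
    exact ENNReal.measurable_ofReal.comp ((hgm _).comp (measurable_pi_apply _))
  have hf : Measurable f := by
    refine Finset.measurable_prod _ fun t _ => ?_
    exact ENNReal.measurable_ofReal.comp ((hgm _).comp (measurable_pi_apply _))
  open Fin.NatCast in
  have hfc : ∀ (x : Fin (n + 1) → S) (z : S), f (Fin.snoc x z) = c x := by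
    intro x z
    refine Finset.prod_congr rfl fun t ht => ?_
    have htn : t ≤ n := (Finset.mem_Icc.1 ht).2
    have h2 : ((t : ℕ) : Fin (n + 2)) = Fin.castSucc ((t : ℕ) : Fin (n + 1)) := by
      apply Fin.ext
      simp only [Fin.val_natCast, Fin.coe_castSucc]
      rw [Nat.mod_eq_of_lt (by omega), Nat.mod_eq_of_lt (by omega)]
    rw [h2, Fin.snoc_castSucc]
  -- step 1
  have hMu : ssmMu π0 P g y (n + 1) n = (ssmMu π0 P g y n n).bind κ := by
    ext s hs
    have hchain : chainLaw π0 P (n + 1) = (chainLaw π0 P n).bind κ := rfl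
    rw [Measure.bind_apply hs hκ.aemeasurable]
    show ((chainLaw π0 P (n + 1)).withDensity f) s = _
    rw [hchain, withDensity_apply _ hs, ← lintegral_indicator hs,
      Measure.lintegral_bind hκ.aemeasurable (hf.indicator hs).aemeasurable]
    have hrhs : ∀ x : Fin (n + 1) → S, κ x s = P (x (Fin.last n)) ((fun z => Fin.snoc x z) ⁻¹' s) := by
      intro x
      exact Measure.map_apply (measurable_snoc_right x) hs
    show _ = ∫⁻ x, κ x s ∂((chainLaw π0 P n).withDensity c)
    have hκs : Measurable fun x => κ x s := (Measure.measurable_coe hs).comp hκ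
    rw [lintegral_withDensity_eq_lintegral_mul _ hc hκs]
    refine lintegral_congr fun x => ?_
    rw [lintegral_map (hf.indicator hs) (measurable_snoc_right x)]
    have hind : ∀ z : S, s.indicator f (Fin.snoc x z)
        = ((fun z => Fin.snoc x z) ⁻¹' s).indicator (fun _ => c x) z := by
      intro z
      by_cases hz : Fin.snoc x z ∈ s <;> simp [Set.indicator, hz, hfc]
    simp_rw [hind]
    rw [lintegral_indicator ((measurable_snoc_right x) hs), setLIntegral_const]
    simp [Pi.mul_apply, hrhs x, mul_comm]
  -- step 2: mass equality
  have hmass : ssmMu π0 P g y (n + 1) n Set.univ = ssmMu π0 P g y n n Set.univ := by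
    rw [hMu, Measure.bind_apply MeasurableSet.univ hκ.aemeasurable]
    have : ∀ x : Fin (n + 1) → S, κ x Set.univ = 1 := by
      intro x
      rw [Measure.map_apply (measurable_snoc_right x) MeasurableSet.univ, Set.preimage_univ,
        measure_univ]
    simp_rw [this]
    simp
  -- final
  ext s hs
  have hev2 : Measurable fun x : Fin (n + 2) → S => x (Fin.last (n + 1)) := measurable_pi_apply _
  have hev1 : Measurable fun x : Fin (n + 1) → S => x (Fin.last n) := measurable_pi_apply _
  rw [Measure.bind_apply hs (Kernel.measurable P).aemeasurable]
  unfold ssmPiMarg ssmPi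
  rw [Measure.map_apply hev2 hs, hmass, Measure.smul_apply, hMu,
    Measure.bind_apply (hev2 hs) hκ.aemeasurable]
  rw [lintegral_map (Kernel.measurable_coe P hs) hev1, lintegral_smul_measure]
  have : ∀ x : Fin (n + 1) → S,
      κ x ((fun a : Fin (n + 2) → S => a (Fin.last (n + 1))) ⁻¹' s) = P (x (Fin.last n)) s := by
    intro x
    rw [Measure.map_apply (measurable_snoc_right x) (hev2 hs)]
    congr 1
    ext z
    simp [Fin.snoc_last]
  simp_rw [this]
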